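/- Let p > 1, 1 < q < p, and let A > 0, B > 0, D > 0 be real numbers. Define F : [0,∞) → ℝ by F(t) = A t^{p-1} − η B t^{q-1} + D, where η > 0. If η < [(p-1)/((p-q)^{(p-q)/(p-1)} (q-1)^{(q-1)/(p-1)})] · A^{(q-1)/(p-1)} D^{(p-q)/(p-1)} / B, then F(t) > 0 for all t ≥ 0. -/

import Mathlib

theorem stmt3 (p q A B D η : ℝ) (hp : 1 < p) (hq : 1 < q) (hqp : q < p)
    (hA : 0 < A) (hB : 0 < B) (hD : 0 < D) (hη : 0 < η)
    (hηlt : η < (p - 1) / ((p - q) ^ ((p - q) / (p - 1)) * (q - 1) ^ ((q - 1) / (p - 1))) *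
      (A ^ ((q - 1) / (p - 1)) * D ^ ((p - q) / (p - 1)) / B)) :
    ∀ t : ℝ, 0 ≤ t → 0 < A * t ^ (p - 1) - η * B * t ^ (q - 1) + D := by
  have hp1 : (0:ℝ) < p - 1 := by linarith
  have hq1 : (0:ℝ) < q - 1 := by linarith
  have hpq : (0:ℝ) < p - q := by linarith
  set α := (q - 1) / (p - 1) with hα
  set β := (p - q) / (p - 1) with hβ
  have hα0 : 0 < α := div_pos hq1 hp1
  have hβ0 : 0 < β := div_pos hpq hp1
  have hαβ : α + β = 1 := by rw [hα, hβ]; field_simp; ring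
  -- compute α^α and β^β
  have hαα : α ^ α = (q - 1) ^ α / (p - 1) ^ α := by
    nth_rewrite 1 [hα]; rw [Real.div_rpow hq1.le hp1.le]
  have hββ : β ^ β = (p - q) ^ β / (p - 1) ^ β := by
    nth_rewrite 1 [hβ]; rw [Real.div_rpow hpq.le hp1.le]
  have hpow : (p - 1) ^ α * (p - 1) ^ β = p - 1 := by
    rw [← Real.rpow_add hp1, hαβ, Real.rpow_one]
  set K := (A / α) ^ α * (D / β) ^ β with hKdef
  have hK : K = (p - 1) / ((p - q) ^ β * (q - 1) ^ α) * (A ^ α * D ^ β) := by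
    have h1 : (0:ℝ) < (q - 1) ^ α := Real.rpow_pos_of_pos hq1 _
    have h2 : (0:ℝ) < (p - q) ^ β := Real.rpow_pos_of_pos hpq _
    have h3 : (0:ℝ) < (p - 1) ^ α := Real.rpow_pos_of_pos hp1 _
    have h4 : (0:ℝ) < (p - 1) ^ β := Real.rpow_pos_of_pos hp1 _
    have hK' : K = (p - 1) ^ α * (p - 1) ^ β / ((p - q) ^ β * (q - 1) ^ α) * (A ^ α * D ^ β) := by
      rw [hKdef, Real.div_rpow hA.le hα0.le, Real.div_rpow hD.le hβ0.le, hαα, hββ]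
      field_simp
    rw [hK', hpow]
  have hηB : η * B < K := by
    have := mul_lt_mul_of_pos_right hηlt hB
    rw [hK]
    calc η * B < (p - 1) / ((p - q) ^ β * (q - 1) ^ α) * (A ^ α * D ^ β / B) * B := this
      _ = (p - 1) / ((p - q) ^ β * (q - 1) ^ α) * (A ^ α * D ^ β) := by
          field_simp
  intro t ht
  set s := t ^ (p - 1) with hs
  have hs0 : 0 ≤ s := Real.rpow_nonneg ht _
  have htq : t ^ (q - 1) = s ^ α := by
    rw [hs, ← Real.rpow_mul ht]
    congr 1
    rw [hα]; field_simp
  have key := Real.geom_mean_le_arith_mean2_weighted hα0.le hβ0.le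
      (div_nonneg (mul_nonneg hA.le hs0) hα0.le) (div_nonneg hD.le hβ0.le) hαβ
  have hrhs : α * (A * s / α) + β * (D / β) = A * s + D := by
    field_simp
  have hlhs : (A * s / α) ^ α * (D / β) ^ β = K * s ^ α := by
    rw [hKdef]
    have : A * s / α = (A / α) * s := by ring
    rw [this, Real.mul_rpow (div_nonneg hA.le hα0.le) hs0]
    ring
  rw [hrhs, hlhs] at key
  have hsa : 0 ≤ s ^ α := Real.rpow_nonneg hs0 _
  have hfin : η * B * s ^ α < A * s + D := by
    rcases hsa.eq_or_lt with h | h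
    · rw [← h]; nlinarith
    · calc η * B * s ^ α < K * s ^ α := mul_lt_mul_of_pos_right hηB h
        _ ≤ A * s + D := key
  rw [htq]
  linarith
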